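/- For a standard Gaussian random vector z in ℝ^d and any real p ≥ 2, E[‖z‖^p] ≤ (d + p)^{p/2}. -/

import Mathlib

open MeasureTheory ProbabilityTheory Real
open scoped ENNReal NNReal

lemma gauss_smul_eq {l : ℝ} :
    (fun x : ℝ => (gaussianPDFReal 0 1 x).toNNReal • Real.exp (l * x ^ 2))
      = fun x : ℝ => (Real.sqrt (2 * Real.pi))⁻¹ * Real.exp (-(1/2 - l) * x ^ 2) := by
  funext x
  rw [NNReal.smul_def, smul_eq_mul, Real.coe_toNNReal _ (gaussianPDFReal_nonneg 0 1 x)]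
  simp only [gaussianPDFReal, NNReal.coe_one, mul_one, sub_zero]
  rw [mul_assoc, ← Real.exp_add]
  congr 1
  ring

lemma gauss_exp_integrable {l : ℝ} (hl : l < 1/2) :
    Integrable (fun x => Real.exp (l * x ^ 2)) (gaussianReal 0 1) := by
  rw [gaussianReal_of_var_ne_zero _ one_ne_zero]
  have hmeas : Measurable (fun x => (gaussianPDFReal 0 1 x).toNNReal) :=
    (measurable_gaussianPDFReal 0 1).real_toNNReal
  have h1 : (gaussianPDF 0 1) = fun x => ((gaussianPDFReal 0 1 x).toNNReal : ℝ≥0∞) := rfl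
  rw [h1, integrable_withDensity_iff_integrable_smul hmeas, gauss_smul_eq]
  exact (integrable_exp_neg_mul_sq (by linarith)).const_mul _

lemma gauss_exp_integral {l : ℝ} (hl0 : 0 ≤ l) (hl : l < 1/2) :
    ∫ x, Real.exp (l * x ^ 2) ∂(gaussianReal 0 1) = Real.sqrt (1 - 2 * l)⁻¹ := by
  rw [gaussianReal_of_var_ne_zero _ one_ne_zero]
  have hmeas : Measurable (fun x => (gaussianPDFReal 0 1 x).toNNReal) :=
    (measurable_gaussianPDFReal 0 1).real_toNNReal
  have h1 : (gaussianPDF 0 1) = fun x => ((gaussianPDFReal 0 1 x).toNNReal : ℝ≥0∞) := rfl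
  rw [h1, integral_withDensity_eq_integral_smul hmeas]
  rw [show (fun x : ℝ => (gaussianPDFReal 0 1 x).toNNReal • Real.exp (l * x ^ 2)) = _ from gauss_smul_eq]
  rw [integral_const_mul, integral_gaussian]
  rw [← Real.sqrt_inv, ← Real.sqrt_mul (by positivity)]
  congr 1
  have h2 : (0:ℝ) < 1/2 - l := by linarith
  have hpi := Real.pi_pos
  have h3 : π ≠ 0 := Real.pi_ne_zero
  have h4 : (1:ℝ) - 2 * l ≠ 0 := by linarith
  field_simp

lemma pi_integrable {n : ℕ} {μ : Measure ℝ} [IsProbabilityMeasure μ] {f : ℝ → ℝ}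
    (hf : Integrable f μ) :
    Integrable (fun x : Fin n → ℝ => ∏ i, f (x i)) (Measure.pi fun _ => μ) := by
  induction n with
  | zero =>
      simp only [Finset.univ_eq_empty, Finset.prod_empty]
      exact integrable_const _
  | succ n ih =>
      have hmp := ((measurePreserving_piFinSuccAbove (fun _ : Fin (n+1) => μ) 0).symm)
      rw [← hmp.integrable_comp_emb (MeasurableEquiv.measurableEmbedding _)]
      simp_rw [MeasurableEquiv.piFinSuccAbove_symm_apply, Fin.insertNthEquiv,
        Fin.prod_univ_succ, Fin.insertNth_zero]
      simp only [Fin.zero_succAbove, cast_eq, Function.comp_def, Fin.cons_zero, Fin.cons_succ]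
      exact Integrable.mul_prod hf ih

lemma pi_integral {n : ℕ} {μ : Measure ℝ} [IsProbabilityMeasure μ] (f : ℝ → ℝ) :
    ∫ x : Fin n → ℝ, ∏ i, f (x i) ∂(Measure.pi fun _ => μ) = (∫ x, f x ∂μ) ^ n := by
  induction n with
  | zero => simp
  | succ n ih =>
      calc ∫ x : Fin (n+1) → ℝ, ∏ i, f (x i) ∂(Measure.pi fun _ => μ)
          = ∫ x : ℝ × (Fin n → ℝ), f x.1 * ∏ i : Fin n, f (x.2 i)
              ∂(μ.prod (Measure.pi fun _ => μ)) := by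
            rw [← ((measurePreserving_piFinSuccAbove (fun _ : Fin (n+1) => μ) 0).symm).integral_comp']
            congr 1
            funext x
            simp [MeasurableEquiv.piFinSuccAbove_symm_apply, Fin.insertNthEquiv,
              Fin.prod_univ_succ, Fin.insertNth_zero, Fin.zero_succAbove]
        _ = (∫ x, f x ∂μ) * (∫ x, f x ∂μ) ^ n := by rw [← ih, ← integral_prod_mul]
        _ = (∫ x, f x ∂μ) ^ (n+1) := by ring

lemma rpow_le_exp_aux {t q l : ℝ} (ht : 0 ≤ t) (hq : 0 < q) (hl : 0 < l) :
    t ^ q ≤ (q / (Real.exp 1 * l)) ^ q * Real.exp (l * t) := by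
  rcases eq_or_lt_of_le ht with h | h
  · rw [← h, Real.zero_rpow hq.ne']
    positivity
  · have hC : 0 < q / (Real.exp 1 * l) := by positivity
    have h1 : Real.log (t * l / q) ≤ t * l / q - 1 :=
      Real.log_le_sub_one_of_pos (by positivity)
    have h2 : Real.log (t * l / q) = Real.log t + Real.log l - Real.log q := by
      rw [Real.log_div (by positivity) hq.ne', Real.log_mul h.ne' hl.ne']
    have h3 : Real.log (q / (Real.exp 1 * l)) = Real.log q - 1 - Real.log l := by
      rw [Real.log_div hq.ne' (by positivity), Real.log_mul (Real.exp_ne_zero 1) hl.ne',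
        Real.log_exp]
      ring
    calc t ^ q = Real.exp (Real.log t * q) := Real.rpow_def_of_pos h q
      _ ≤ Real.exp (Real.log (q / (Real.exp 1 * l)) * q + l * t) := by
          rw [Real.exp_le_exp, h3]
          have h4 : q * (t * l / q) = t * l := by field_simp
          nlinarith [mul_le_mul_of_nonneg_left h1 hq.le]
      _ = (q / (Real.exp 1 * l)) ^ q * Real.exp (l * t) := by
          rw [Real.exp_add, ← Real.rpow_def_of_pos hC]

lemma arith_aux (D p : ℝ) (hD : 1 ≤ D) (hp : 2 ≤ p) :
    ((p/2) / (Real.exp 1 * (p / (2 * (D + p))))) ^ (p/2)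
      * ((1 - 2 * (p / (2 * (D + p))))⁻¹) ^ (D/2) ≤ (D + p) ^ (p/2) := by
  have hD0 : (0:ℝ) < D := by linarith
  have hp0 : (0:ℝ) < p := by linarith
  have hDp : (0:ℝ) < D + p := by linarith
  have h1 : (p/2) / (Real.exp 1 * (p / (2 * (D + p)))) = (D + p) / Real.exp 1 := by
    rw [div_eq_div_iff (by positivity) (by positivity)]
    field_simp
  have h2 : (1 - 2 * (p / (2 * (D + p))))⁻¹ = (D + p) / D := by
    rw [show 1 - 2 * (p / (2 * (D + p))) = D / (D + p) by field_simp; ring]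
    rw [inv_div]
  rw [h1, h2]
  rw [← Real.log_le_log_iff (by positivity) (by positivity)]
  rw [Real.log_mul (by positivity) (by positivity), Real.log_rpow (by positivity),
    Real.log_rpow (by positivity), Real.log_rpow hDp,
    Real.log_div hDp.ne' (Real.exp_ne_zero 1), Real.log_exp]
  have hlog : Real.log ((D + p) / D) ≤ p / D := by
    have h5 := Real.log_le_sub_one_of_pos (show (0:ℝ) < (D+p)/D by positivity)
    have h6 : (D + p) / D - 1 = p / D := by field_simp; ring
    linarith
  have h7 : D / 2 * ((D + p) / D - 1) = p / 2 := by field_simp; ring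
  nlinarith [mul_le_mul_of_nonneg_left hlog (by positivity : (0:ℝ) ≤ D/2),
    Real.log_le_sub_one_of_pos (show (0:ℝ) < (D+p)/D by positivity)]

theorem stmt_9 (d : ℕ) (p : ℝ) (hp : 2 ≤ p) :
    ∫ z : Fin d → ℝ, (Real.sqrt (∑ i, (z i) ^ 2)) ^ p
        ∂(Measure.pi fun _ : Fin d => gaussianReal 0 1)
      ≤ ((d : ℝ) + p) ^ (p / 2) := by
  have hp0 : (0:ℝ) < p := by linarith
  rcases Nat.eq_zero_or_pos d with hd | hd
  · subst hd
    have hz : (fun z : Fin 0 → ℝ => (Real.sqrt (∑ i, (z i) ^ 2)) ^ p)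
        = fun _ => (0:ℝ) := by
      funext z
      simp [Real.zero_rpow hp0.ne']
    rw [hz, integral_zero]
    exact Real.rpow_nonneg (by linarith) _
  · have hd1 : (1:ℝ) ≤ d := by exact_mod_cast hd
    set l := p / (2 * ((d:ℝ) + p)) with hldef
    have hdp : (0:ℝ) < (d:ℝ) + p := by linarith
    have hl0 : 0 < l := by positivity
    have hl : l < 1/2 := by
      rw [hldef, div_lt_div_iff₀ (by positivity) (by norm_num)]
      linarith
    set C := ((p/2) / (Real.exp 1 * l)) ^ (p/2) with hCdef
    have key : ∀ z : Fin d → ℝ,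
        (Real.sqrt (∑ i, (z i) ^ 2)) ^ p ≤ C * ∏ i, Real.exp (l * (z i) ^ 2) := by
      intro z
      have hs : (0:ℝ) ≤ ∑ i, (z i) ^ 2 := by positivity
      have hprod : ∏ i, Real.exp (l * (z i) ^ 2) = Real.exp (l * ∑ i, (z i) ^ 2) := by
        rw [← Real.exp_sum, Finset.mul_sum]
      have hrw : (Real.sqrt (∑ i, (z i) ^ 2)) ^ p = (∑ i, (z i) ^ 2) ^ (p/2) := by
        rw [Real.sqrt_eq_rpow, ← Real.rpow_mul hs]
        congr 1
        ring
      rw [hprod, hrw, hCdef]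
      exact rpow_le_exp_aux hs (by linarith) hl0
    have hint : Integrable
        (fun z : Fin d → ℝ => C * ∏ i, Real.exp (l * (z i) ^ 2))
        (Measure.pi fun _ : Fin d => gaussianReal 0 1) :=
      (pi_integrable (gauss_exp_integrable hl)).const_mul C
    have hmono := integral_mono_of_nonneg
      (ae_of_all _ fun z => Real.rpow_nonneg (Real.sqrt_nonneg _) p) hint (ae_of_all _ key)
    refine hmono.trans ?_
    rw [integral_const_mul, pi_integral (μ := gaussianReal 0 1) (fun t => Real.exp (l * t ^ 2)), gauss_exp_integral hl0.le hl]
    have hpos : (0:ℝ) ≤ (1 - 2 * l)⁻¹ := by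
      have : (0:ℝ) < 1 - 2 * l := by linarith
      positivity
    have hsq : Real.sqrt ((1 - 2 * l)⁻¹) ^ d = ((1 - 2 * l)⁻¹) ^ ((d:ℝ)/2) := by
      rw [Real.sqrt_eq_rpow, ← Real.rpow_natCast (((1 - 2*l)⁻¹) ^ ((1:ℝ)/2)) d,
        ← Real.rpow_mul hpos]
      congr 1
      ring
    rw [hsq, hCdef, hldef]
    exact arith_aux (d:ℝ) p hd1 hp
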